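/- Let ξ ∈ 𝔽_q((T^{-1})) be irrational with |ξ| ≤ 1, let x = (ξ, 1)ᵀ, and let P_k/Q_k denote the continued fraction convergents to ξ. If γ ∈ SL₂(𝔽_q[T]) satisfies |γ| < |Q_{k+1}|, then |γx| ≥ 1/|Q_k|. -/

import Mathlib

open Polynomial Filter
open scoped Classical ENNReal

noncomputable section

variable (Fq : Type) [Field Fq] [Fintype Fq]

/-- The element `T` inside the Laurent-series field `𝔽_q((T⁻¹))`, which we realize
as the field of Hahn/Laurent series in the variable `T⁻¹`. -/
def Tel : LaurentSeries Fq := HahnSeries.single (-1 : ℤ) 1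

/-- The inverse variable `T⁻¹` itself. -/
def TinvEl : LaurentSeries Fq := HahnSeries.single (1 : ℤ) 1

/-- The embedding of the polynomial ring `𝔽_q[T]` into `𝔽_q((T⁻¹))`,
sending `T` to `Tel`. -/
def polyToL (P : Polynomial Fq) : LaurentSeries Fq :=
  Polynomial.eval₂ HahnSeries.C (Tel Fq) P

/-- The absolute value `|x| = q ^ (deg x)` on `𝔽_q((T⁻¹))`, with `|0| = 0`.
Here the degree of `x ≠ 0` is minus the order of `x` as a series in `T⁻¹`. -/
def labs (x : LaurentSeries Fq) : ℝ :=
  if x = 0 then 0 else (Fintype.card Fq : ℝ) ^ (-x.order)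

/-- `‖x‖`: the distance from `x` to the nearest polynomial. -/
def lnorm (x : LaurentSeries Fq) : ℝ :=
  ⨅ P : Polynomial Fq, labs Fq (x - polyToL Fq P)

/-- `x ∈ 𝔽_q(T)`, i.e. `x` is rational. -/
def IsRat (x : LaurentSeries Fq) : Prop :=
  ∃ P Q : Polynomial Fq, Q ≠ 0 ∧ polyToL Fq Q * x = polyToL Fq P


/-- `SL₂(𝔽_q[T])`. -/
abbrev SL2 := Matrix.SpecialLinearGroup (Fin 2) (Polynomial Fq)

/-- Maximum of the absolute values of the entries of a `2 × 2` matrix. -/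
def matAbs (M : Matrix (Fin 2) (Fin 2) (LaurentSeries Fq)) : ℝ :=
  max (max (labs Fq (M 0 0)) (labs Fq (M 0 1))) (max (labs Fq (M 1 0)) (labs Fq (M 1 1)))

/-- The size `|γ|` of a matrix `γ ∈ SL₂(𝔽_q[T])`. -/
def gabs (γ : SL2 Fq) : ℝ :=
  matAbs Fq (((γ : Matrix (Fin 2) (Fin 2) (Polynomial Fq))).map (polyToL Fq))

/-- Maximum of the absolute values of the coordinates of a vector. -/
def vabs (v : Fin 2 → LaurentSeries Fq) : ℝ :=
  max (labs Fq (v 0)) (labs Fq (v 1))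

/-- The standard linear action of `SL₂(𝔽_q[T])` on `𝔽_q((T⁻¹))²`. -/
def act (γ : SL2 Fq) (v : Fin 2 → LaurentSeries Fq) : Fin 2 → LaurentSeries Fq :=
  (((γ : Matrix (Fin 2) (Fin 2) (Polynomial Fq))).map (polyToL Fq)).mulVec v

/-- The asymptotic Diophantine exponent `μ(x, y)` (as an element of `ℝ≥0∞`). -/
def muExp (x y : Fin 2 → LaurentSeries Fq) : ℝ≥0∞ :=
  ⨆ m ∈ {m : ℝ |
      {γ : SL2 Fq | vabs Fq (act Fq γ x - y) ≤ gabs Fq γ ^ (-m)}.Infinite},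
    ENNReal.ofReal m

/-- The uniform Diophantine exponent `μ̂(x, y)` (as an element of `ℝ≥0∞`). -/
def muHatExp (x y : Fin 2 → LaurentSeries Fq) : ℝ≥0∞ :=
  ⨆ m ∈ {m : ℝ | ∀ᶠ H : ℝ in atTop, ∃ γ : SL2 Fq,
      gabs Fq γ ≤ H ∧ vabs Fq (act Fq γ x - y) ≤ H ^ (-m)},
    ENNReal.ofReal m

/-- The irrationality exponent `ω(ξ)` (as an element of `ℝ≥0∞`). -/
def omegaExp (ξ : LaurentSeries Fq) : ℝ≥0∞ :=
  ⨆ w ∈ {w : ℝ |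
      {Q : Polynomial Fq | Q ≠ 0 ∧
        lnorm Fq (polyToL Fq Q * ξ) ≤ labs Fq (polyToL Fq Q) ^ (-w)}.Infinite},
    ENNReal.ofReal w

/-- Numerators `P_n` of the continued-fraction convergents associated with
partial quotients `C 0 = A₀, C 1 = A₁, …`; indices are shifted by `2`, so that
`cfNum C 0 = P₋₂ = 0`, `cfNum C 1 = P₋₁ = 1`, and `cfNum C (n + 2) = Pₙ`. -/
def cfNum (C : ℕ → Polynomial Fq) : ℕ → Polynomial Fq
  | 0 => 0
  | 1 => 1
  | n + 2 => C n * cfNum C (n + 1) + cfNum C n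

/-- Denominators `Q_n` of the continued-fraction convergents, with
`cfDen C 0 = Q₋₂ = 1`, `cfDen C 1 = Q₋₁ = 0`, and `cfDen C (n + 2) = Qₙ`. -/
def cfDen (C : ℕ → Polynomial Fq) : ℕ → Polynomial Fq
  | 0 => 1
  | 1 => 0
  | n + 2 => C n * cfDen C (n + 1) + cfDen C n

/-- `ξ` has continued-fraction expansion `[C 0; C 1, C 2, …]`, expressed by the
characteristic property `|Qₙ ξ − Pₙ| = |Q_{n+1}|⁻¹` of the convergents. -/
def HasCF (ξ : LaurentSeries Fq) (C : ℕ → Polynomial Fq) : Prop :=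
  ∀ n : ℕ, labs Fq (polyToL Fq (cfDen Fq C (n + 2)) * ξ - polyToL Fq (cfNum Fq C (n + 2)))
    = (labs Fq (polyToL Fq (cfDen Fq C (n + 3))))⁻¹

/-- The convergent matrix `M_k` with rows `(Q_k, −P_k)` and
`((−1)^(k−1) Q_{k−1}, (−1)^k P_{k−1})`. -/
def cfM (C : ℕ → Polynomial Fq) (k : ℕ) : Matrix (Fin 2) (Fin 2) (Polynomial Fq) :=
  !![cfDen Fq C (k + 2), -cfNum Fq C (k + 2);
     (-1 : Polynomial Fq) ^ (k + 1) * cfDen Fq C (k + 1), (-1 : Polynomial Fq) ^ k * cfNum Fq C (k + 1)]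

/-- The unipotent matrix `U(a)`. -/
def Umat (a : Polynomial Fq) : Matrix (Fin 2) (Fin 2) (Polynomial Fq) :=
  !![1, a; 0, 1]

section Aux

variable {Fq : Type} [Field Fq] [Fintype Fq]

lemma one_lt_q : (1 : ℝ) < (Fintype.card Fq : ℝ) := by
  exact_mod_cast Fintype.one_lt_card

lemma q_pos : (0 : ℝ) < (Fintype.card Fq : ℝ) := lt_trans one_pos one_lt_q

lemma labs_zero : labs Fq 0 = 0 := if_pos rfl

lemma labs_of_ne {x : LaurentSeries Fq} (hx : x ≠ 0) :
    labs Fq x = (Fintype.card Fq : ℝ) ^ (-x.order) := if_neg hx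

lemma labs_nonneg (x : LaurentSeries Fq) : 0 ≤ labs Fq x := by
  unfold labs; split
  · exact le_refl _
  · positivity

lemma labs_pos {x : LaurentSeries Fq} (hx : x ≠ 0) : 0 < labs Fq x := by
  rw [labs_of_ne hx]; positivity

lemma labs_mul (x y : LaurentSeries Fq) : labs Fq (x * y) = labs Fq x * labs Fq y := by
  rcases eq_or_ne x 0 with rfl | hx
  · simp [labs_zero]
  rcases eq_or_ne y 0 with rfl | hy
  · simp [labs_zero]
  have hxy : x * y ≠ 0 := mul_ne_zero hx hy
  rw [labs_of_ne hx, labs_of_ne hy, labs_of_ne hxy, HahnSeries.order_mul hx hy, neg_add,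
    zpow_add₀ (ne_of_gt q_pos)]

lemma labs_neg (x : LaurentSeries Fq) : labs Fq (-x) = labs Fq x := by
  rcases eq_or_ne x 0 with rfl | hx
  · simp
  · rw [labs_of_ne (neg_ne_zero.mpr hx), labs_of_ne hx, HahnSeries.order_neg]

lemma labs_one : labs Fq 1 = 1 := by
  rw [labs_of_ne one_ne_zero, HahnSeries.order_one]; norm_num

lemma labs_lt_iff {x y : LaurentSeries Fq} (hx : x ≠ 0) (hy : y ≠ 0) :
    labs Fq x < labs Fq y ↔ y.order < x.order := by
  rw [labs_of_ne hx, labs_of_ne hy, zpow_lt_zpow_iff_right₀ one_lt_q, neg_lt_neg_iff]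

lemma labs_add_of_lt {x y : LaurentSeries Fq} (h : labs Fq x < labs Fq y) :
    labs Fq (x + y) = labs Fq y := by
  have hy : y ≠ 0 := by rintro rfl; exact absurd (labs_nonneg x) (by simpa [labs_zero] using h)
  rcases eq_or_ne x 0 with rfl | hx
  · rw [zero_add]
  have horder : y.order < x.order := (labs_lt_iff hx hy).mp h
  have hxy : x + y ≠ 0 := by
    rintro hz
    have hx' : x = -y := eq_neg_of_add_eq_zero_left hz
    rw [hx', HahnSeries.order_neg] at horder
    exact lt_irrefl _ horder
  have hot : y.orderTop < x.orderTop := by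
    rw [← HahnSeries.order_eq_orderTop_of_ne_zero hx, ← HahnSeries.order_eq_orderTop_of_ne_zero hy]
    exact_mod_cast horder
  have h2 : (x + y).orderTop = y.orderTop := HahnSeries.orderTop_add_eq_right hot
  rw [← HahnSeries.order_eq_orderTop_of_ne_zero hxy, ← HahnSeries.order_eq_orderTop_of_ne_zero hy] at h2
  rw [labs_of_ne hxy, labs_of_ne hy, WithTop.coe_inj.mp h2]

lemma labs_add_of_lt' {x y : LaurentSeries Fq} (h : labs Fq y < labs Fq x) :
    labs Fq (x + y) = labs Fq x := by rw [add_comm]; exact labs_add_of_lt h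

lemma labs_add_of_ne {x y : LaurentSeries Fq} (h : labs Fq x ≠ labs Fq y) :
    labs Fq (x + y) = max (labs Fq x) (labs Fq y) := by
  rcases lt_or_gt_of_ne h with h' | h'
  · rw [labs_add_of_lt h', max_eq_right h'.le]
  · rw [labs_add_of_lt' h', max_eq_left h'.le]

end Aux
section Aux2

set_option linter.unusedSectionVars false

variable {Fq : Type} [Field Fq] [Fintype Fq]

lemma polyToL_eq : polyToL Fq = ⇑(Polynomial.eval₂RingHom (HahnSeries.C : Fq →+* LaurentSeries Fq) (Tel Fq)) := rfl

lemma polyToL_mul (P Q : Polynomial Fq) : polyToL Fq (P * Q) = polyToL Fq P * polyToL Fq Q := by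
  rw [polyToL_eq, map_mul]

lemma polyToL_add (P Q : Polynomial Fq) : polyToL Fq (P + Q) = polyToL Fq P + polyToL Fq Q := by
  rw [polyToL_eq, map_add]

lemma polyToL_zero : polyToL Fq 0 = 0 := by rw [polyToL_eq, map_zero]

lemma polyToL_one : polyToL Fq 1 = 1 := by rw [polyToL_eq, map_one]

lemma polyToL_neg (P : Polynomial Fq) : polyToL Fq (-P) = -polyToL Fq P := by
  rw [polyToL_eq, map_neg]

lemma polyToL_monomial (n : ℕ) (a : Fq) :
    polyToL Fq (Polynomial.C a * Polynomial.X ^ n) = HahnSeries.single (-(n : ℤ)) a := by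
  unfold polyToL
  simp only [Polynomial.eval₂_mul, Polynomial.eval₂_pow, Polynomial.eval₂_C, Polynomial.eval₂_X]
  unfold Tel
  rw [HahnSeries.single_pow]
  have : (HahnSeries.C a : LaurentSeries Fq) = HahnSeries.single (0 : ℤ) a := rfl
  rw [this, HahnSeries.single_mul_single]
  simp

lemma polyToL_order_aux : ∀ (n : ℕ) (P : Polynomial Fq), P.natDegree ≤ n → P ≠ 0 →
    polyToL Fq P ≠ 0 ∧ (polyToL Fq P).order = -(P.natDegree : ℤ) := by
  intro n
  induction n with
  | zero =>
    intro P hd hP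
    have h0 : P.natDegree = 0 := Nat.le_zero.mp hd
    have hC : P = Polynomial.C (P.coeff 0) := Polynomial.eq_C_of_natDegree_eq_zero h0
    have ha : P.coeff 0 ≠ 0 := by
      intro h; rw [h, map_zero] at hC; exact hP hC
    have := polyToL_monomial (Fq := Fq) 0 (P.coeff 0)
    rw [pow_zero, mul_one] at this
    constructor
    · rw [hC, this]; exact HahnSeries.single_ne_zero ha
    · rw [h0]
      conv_lhs => rw [hC, this]
      rw [HahnSeries.order_single ha, Nat.cast_zero]
  | succ n ih =>
    intro P hd hP
    set d := P.natDegree with hdd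
    have hlc : P.leadingCoeff ≠ 0 := Polynomial.leadingCoeff_ne_zero.mpr hP
    have hsplit : P.eraseLead + Polynomial.C P.leadingCoeff * Polynomial.X ^ d = P :=
      Polynomial.eraseLead_add_C_mul_X_pow P
    set M : LaurentSeries Fq := HahnSeries.single (-(d : ℤ)) P.leadingCoeff with hM
    have hMne : M ≠ 0 := HahnSeries.single_ne_zero hlc
    have hMord : M.order = -(d : ℤ) := HahnSeries.order_single hlc
    have hPL : polyToL Fq P = polyToL Fq P.eraseLead + M := by
      conv_lhs => rw [← hsplit]
      rw [polyToL_add, polyToL_monomial]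
    by_cases hE : P.eraseLead = 0
    · rw [hPL, hE, polyToL_zero, zero_add]
      exact ⟨hMne, hMord⟩
    · have hdE : P.eraseLead.natDegree < d := by
        rcases Polynomial.eraseLead_natDegree_lt_or_eraseLead_eq_zero P with h | h
        · exact h
        · exact absurd h hE
      obtain ⟨hEne, hEord⟩ := ih P.eraseLead (by omega) hE
      have hot : M.orderTop < (polyToL Fq P.eraseLead).orderTop := by
        rw [← HahnSeries.order_eq_orderTop_of_ne_zero hMne,
          ← HahnSeries.order_eq_orderTop_of_ne_zero hEne, hMord, hEord]
        exact_mod_cast (by omega : -(d : ℤ) < -(P.eraseLead.natDegree : ℤ))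
      have h2 : (polyToL Fq P.eraseLead + M).orderTop = M.orderTop :=
        HahnSeries.orderTop_add_eq_right hot
      have hne : polyToL Fq P.eraseLead + M ≠ 0 := by
        intro h
        rw [h, HahnSeries.orderTop_zero, ← HahnSeries.order_eq_orderTop_of_ne_zero hMne] at h2
        exact (WithTop.top_ne_coe) h2
      rw [← HahnSeries.order_eq_orderTop_of_ne_zero hne,
        ← HahnSeries.order_eq_orderTop_of_ne_zero hMne] at h2
      rw [hPL]
      exact ⟨hne, by rw [WithTop.coe_inj.mp h2, hMord]⟩

lemma polyToL_ne_zero {P : Polynomial Fq} (hP : P ≠ 0) : polyToL Fq P ≠ 0 :=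
  (polyToL_order_aux P.natDegree P le_rfl hP).1

lemma labs_polyToL {P : Polynomial Fq} (hP : P ≠ 0) :
    labs Fq (polyToL Fq P) = (Fintype.card Fq : ℝ) ^ (P.natDegree : ℤ) := by
  rw [labs_of_ne (polyToL_ne_zero hP), (polyToL_order_aux P.natDegree P le_rfl hP).2, neg_neg]

lemma one_le_labs_polyToL {P : Polynomial Fq} (hP : P ≠ 0) : 1 ≤ labs Fq (polyToL Fq P) := by
  rw [labs_polyToL hP]
  exact one_le_zpow₀ one_lt_q.le (by positivity)

lemma q_le_labs_polyToL {P : Polynomial Fq} (hP : 0 < P.natDegree) :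
    (Fintype.card Fq : ℝ) ≤ labs Fq (polyToL Fq P) := by
  have hP0 : P ≠ 0 := by intro h; rw [h] at hP; simp at hP
  rw [labs_polyToL hP0]
  calc (Fintype.card Fq : ℝ) = (Fintype.card Fq : ℝ) ^ (1 : ℤ) := (zpow_one _).symm
    _ ≤ _ := by rw [zpow_le_zpow_iff_right₀ one_lt_q]; exact_mod_cast hP

end Aux2
section Aux3

set_option linter.unusedSectionVars false

variable {Fq : Type} [Field Fq] [Fintype Fq]

lemma cf_det (C : ℕ → Polynomial Fq) : ∀ n : ℕ,
    cfNum Fq C (n+1) * cfDen Fq C (n+2) - cfNum Fq C (n+2) * cfDen Fq C (n+1)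
      = (-1 : Polynomial Fq) ^ n := by
  intro n
  induction n with
  | zero => simp [cfNum, cfDen]
  | succ n ih =>
    show cfNum Fq C (n+2) * cfDen Fq C (n+3) - cfNum Fq C (n+3) * cfDen Fq C (n+2) = _
    rw [show cfDen Fq C (n+3) = C (n+1) * cfDen Fq C (n+2) + cfDen Fq C (n+1) from rfl,
      show cfNum Fq C (n+3) = C (n+1) * cfNum Fq C (n+2) + cfNum Fq C (n+1) from rfl,
      pow_succ]
    linear_combination -ih

lemma cf_growth {C : ℕ → Polynomial Fq} (hdeg : ∀ i, 1 ≤ i → 0 < (C i).natDegree) :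
    ∀ n : ℕ, cfDen Fq C (n+2) ≠ 0 ∧
      labs Fq (polyToL Fq (cfDen Fq C (n+1))) < labs Fq (polyToL Fq (cfDen Fq C (n+2))) := by
  intro n
  induction n with
  | zero =>
    have h2 : cfDen Fq C 2 = 1 := by
      show C 0 * cfDen Fq C 1 + cfDen Fq C 0 = 1
      show C 0 * 0 + 1 = 1
      ring
    have h1 : cfDen Fq C 1 = 0 := rfl
    rw [h2, h1, polyToL_one, polyToL_zero, labs_one, labs_zero]
    exact ⟨one_ne_zero, one_pos⟩
  | succ n ih =>
    obtain ⟨hne, hlt⟩ := ih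
    have hCn : C (n+1) ≠ 0 := by
      intro h
      have := hdeg (n+1) (by omega)
      rw [h] at this; simp at this
    have hrec : cfDen Fq C (n+3) = C (n+1) * cfDen Fq C (n+2) + cfDen Fq C (n+1) := rfl
    have hd2pos : 0 < labs Fq (polyToL Fq (cfDen Fq C (n+2))) := labs_pos (polyToL_ne_zero hne)
    have hfirst : labs Fq (polyToL Fq (C (n+1) * cfDen Fq C (n+2)))
        = labs Fq (polyToL Fq (C (n+1))) * labs Fq (polyToL Fq (cfDen Fq C (n+2))) := by
      rw [polyToL_mul, labs_mul]
    have hq : (Fintype.card Fq : ℝ) ≤ labs Fq (polyToL Fq (C (n+1))) :=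
      q_le_labs_polyToL (hdeg (n+1) (by omega))
    have hbig : labs Fq (polyToL Fq (cfDen Fq C (n+2)))
        < labs Fq (polyToL Fq (C (n+1) * cfDen Fq C (n+2))) := by
      rw [hfirst]
      calc labs Fq (polyToL Fq (cfDen Fq C (n+2)))
          = 1 * labs Fq (polyToL Fq (cfDen Fq C (n+2))) := (one_mul _).symm
        _ < _ := by
            apply mul_lt_mul_of_pos_right _ hd2pos
            exact lt_of_lt_of_le one_lt_q hq
    have hsum : labs Fq (polyToL Fq (cfDen Fq C (n+3)))
        = labs Fq (polyToL Fq (C (n+1) * cfDen Fq C (n+2)))  := by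
      rw [hrec, polyToL_add]
      exact labs_add_of_lt' (lt_trans hlt hbig)
    have hlt3 : labs Fq (polyToL Fq (cfDen Fq C (n+2)))
        < labs Fq (polyToL Fq (cfDen Fq C (n+3))) := by rw [hsum]; exact hbig
    refine ⟨?_, hlt3⟩
    intro h
    rw [h, polyToL_zero, labs_zero] at hlt3
    exact absurd (lt_trans hd2pos hlt3) (lt_irrefl 0)

end Aux3

/-- **Lower bound for the homogeneous orbit.** If `|γ| < |Q_{k+1}|`, then
`|γ·(ξ, 1)ᵀ| ≥ 1/|Q_k|`. -/
theorem stmt14 (ξ : LaurentSeries Fq) (hξirr : ¬ IsRat Fq ξ) (hξ1 : labs Fq ξ ≤ 1)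
    (C : ℕ → Polynomial Fq) (hdeg : ∀ i, 1 ≤ i → 0 < (C i).natDegree)
    (hcf : HasCF Fq ξ C) (k : ℕ) (γ : SL2 Fq)
    (hγ : gabs Fq γ < labs Fq (polyToL Fq (cfDen Fq C (k + 3)))) :
    (labs Fq (polyToL Fq (cfDen Fq C (k + 2))))⁻¹ ≤ vabs Fq (act Fq γ ![ξ, 1]) := by
  classical
  set φ := polyToL Fq with hφ
  set q1 := cfDen Fq C (k+1)
  set q2 := cfDen Fq C (k+2)
  set q3 := cfDen Fq C (k+3)
  set p1 := cfNum Fq C (k+1)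
  set p2 := cfNum Fq C (k+2)
  obtain ⟨hq2ne, h12⟩ := cf_growth hdeg k
  obtain ⟨hq3ne, h23⟩ := cf_growth hdeg (k+1)
  have hq2pos : 0 < labs Fq (φ q2) := labs_pos (polyToL_ne_zero hq2ne)
  have hq3pos : 0 < labs Fq (φ q3) := labs_pos (polyToL_ne_zero hq3ne)
  have h13 : labs Fq (φ q1) < labs Fq (φ q3) := lt_trans h12 h23
  -- the sign element
  have hsq : ((-1 : Polynomial Fq) ^ k) * ((-1 : Polynomial Fq) ^ k) = 1 := by
    rw [← pow_add]; exact Even.neg_one_pow ⟨k, rfl⟩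
  have hek : ((-1 : Polynomial Fq) ^ (k+1)) = -((-1 : Polynomial Fq) ^ k) := by
    rw [pow_succ]; ring
  have hdet := cf_det C k
  -- matrices
  set M := cfM Fq C k with hMdef
  set N : Matrix (Fin 2) (Fin 2) (Polynomial Fq) :=
    !![(-1 : Polynomial Fq)^k * p1, p2;
       -((-1 : Polynomial Fq)^(k+1) * q1), q2] with hNdef
  have hNM : N * M = 1 := by
    rw [hNdef, hMdef, cfM, Matrix.mul_fin_two, Matrix.one_fin_two]
    rw [show (-1 : Polynomial Fq)^k * p1 * q2 + p2 * ((-1 : Polynomial Fq)^(k+1) * cfDen Fq C (k+1)) = 1 by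
        rw [hek]; linear_combination (-1 : Polynomial Fq)^k * hdet + hsq,
      show (-1 : Polynomial Fq)^k * p1 * -cfNum Fq C (k+2) + p2 * ((-1 : Polynomial Fq)^k * cfNum Fq C (k+1)) = 0 by ring,
      show -((-1 : Polynomial Fq)^(k+1) * q1) * q2 + q2 * ((-1 : Polynomial Fq)^(k+1) * cfDen Fq C (k+1)) = 0 by ring,
      show -((-1 : Polynomial Fq)^(k+1) * q1) * -cfNum Fq C (k+2) + q2 * ((-1 : Polynomial Fq)^k * cfNum Fq C (k+1)) = 1 by
        rw [hek]; linear_combination (-1 : Polynomial Fq)^k * hdet + hsq]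
  set γm := (γ : Matrix (Fin 2) (Fin 2) (Polynomial Fq)) with hγm
  set D := γm * N with hDdef
  have hDM : D * M = γm := by rw [hDdef, Matrix.mul_assoc, hNM, Matrix.mul_one]
  set E := D 0 0
  set F := D 0 1
  set G := D 1 0
  set H := D 1 1
  have hdetD : E * H - F * G = 1 := by
    have h1 : D.det = 1 := by
      rw [hDdef, Matrix.det_mul, γ.det_coe, one_mul, hNdef, Matrix.det_fin_two_of, hek]
      linear_combination (-1 : Polynomial Fq)^k * hdet + hsq
    rw [Matrix.det_fin_two] at h1
    exact h1
  -- the vector after M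
  set u : LaurentSeries Fq := φ q2 * ξ - φ p2 with hu
  set w : LaurentSeries Fq := φ ((-1 : Polynomial Fq)^(k+1) * q1) * ξ + φ ((-1 : Polynomial Fq)^k * p1) with hwdef
  have hφsign : ∀ m : ℕ, φ ((-1 : Polynomial Fq)^m) = (-1 : LaurentSeries Fq)^m := by
    intro m; rw [hφ, polyToL_eq, map_pow, map_neg, map_one]
  have hsignabs : ∀ m : ℕ, labs Fq ((-1 : LaurentSeries Fq)^m) = 1 := by
    intro m
    rcases neg_one_pow_eq_or (LaurentSeries Fq) m with h | h <;> rw [h]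
    · exact labs_one
    · rw [show (-1 : LaurentSeries Fq) = -(1 : LaurentSeries Fq) by ring, labs_neg]
      exact labs_one
  have huabs : labs Fq u = (labs Fq (φ q3))⁻¹ := hcf k
  have hw1abs : labs Fq (φ q1 * ξ - φ p1) = (labs Fq (φ q2))⁻¹ := by
    cases k with
    | zero =>
      have e1 : q1 = 0 := rfl
      have e2 : p1 = 1 := rfl
      have e3 : q2 = 1 := by
        show C 0 * cfDen Fq C 1 + cfDen Fq C 0 = 1
        show C 0 * 0 + 1 = 1
        ring
      rw [e1, e2, e3, hφ, polyToL_zero, polyToL_one, zero_mul, zero_sub, labs_neg, labs_one]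
      norm_num
    | succ m => exact hcf m
  have hwabs : labs Fq w = (labs Fq (φ q2))⁻¹ := by
    have : w = (-1 : LaurentSeries Fq)^(k+1) * (φ q1 * ξ - φ p1) := by
      rw [hwdef, hφ, polyToL_mul, polyToL_mul, ← hφ, hφsign, hφsign, pow_succ]
      ring
    rw [this, labs_mul, hsignabs, one_mul, hw1abs]
  -- entry bound
  have hent : ∀ i j, labs Fq (φ (γm i j)) ≤ gabs Fq γ := by
    intro i j
    have : gabs Fq γ = matAbs Fq (γm.map φ) := rfl
    rw [this]
    unfold matAbs
    rw [Matrix.map_apply]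
    fin_cases i <;> fin_cases j
    · exact le_max_of_le_left (le_max_left _ _)
    · exact le_max_of_le_left (le_max_right _ _)
    · exact le_max_of_le_right (le_max_left _ _)
    · exact le_max_of_le_right (le_max_right _ _)
  -- action components
  have hact : act Fq γ ![ξ, 1] = (D.map φ).mulVec ((M.map φ).mulVec ![ξ, 1]) := by
    show (γm.map φ).mulVec ![ξ, 1] = _
    rw [← hDM, hφ, polyToL_eq, Matrix.map_mul, Matrix.mulVec_mulVec]
  have hMv : (M.map φ).mulVec ![ξ, 1] = ![u, w] := by
    funext i
    fin_cases i <;>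
      simp [hMdef, cfM, Matrix.mulVec, dotProduct, Fin.sum_univ_two, hu, hwdef, hφ,
        polyToL_neg] <;> ring
  have hcomp0 : act Fq γ ![ξ, 1] 0 = φ E * u + φ F * w := by
    rw [hact, hMv]
    simp [Matrix.mulVec, dotProduct, Fin.sum_univ_two, Matrix.map_apply]
    rfl
  have hcomp1 : act Fq γ ![ξ, 1] 1 = φ G * u + φ H * w := by
    rw [hact, hMv]
    simp [Matrix.mulVec, dotProduct, Fin.sum_univ_two, Matrix.map_apply]
    rfl
  -- the row lemma
  have row : ∀ r s : Polynomial Fq, s ≠ 0 →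
      labs Fq (φ (r * q2 + s * ((-1 : Polynomial Fq)^(k+1) * q1))) < labs Fq (φ q3) →
      (labs Fq (φ q2))⁻¹ ≤ labs Fq (φ r * u + φ s * w) := by
    intro r s hs hcol
    have hsabs : 1 ≤ labs Fq (φ s) := one_le_labs_polyToL hs
    have hA : labs Fq (φ r * u) = labs Fq (φ r) * (labs Fq (φ q3))⁻¹ := by
      rw [labs_mul, huabs]
    have hB : labs Fq (φ s * w) = labs Fq (φ s) * (labs Fq (φ q2))⁻¹ := by
      rw [labs_mul, hwabs]
    have hBge : (labs Fq (φ q2))⁻¹ ≤ labs Fq (φ s * w) := by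
      rw [hB]
      nth_rewrite 1 [← one_mul (labs Fq (φ q2))⁻¹]
      exact mul_le_mul_of_nonneg_right hsabs (by positivity)
    by_cases hAB : labs Fq (φ r * u) = labs Fq (φ s * w)
    · exfalso
      have hcross : labs Fq (φ r) * labs Fq (φ q2) = labs Fq (φ s) * labs Fq (φ q3) := by
        rw [hA, hB] at hAB
        field_simp at hAB
        linarith [hAB]
      have hfirst : labs Fq (φ (r * q2)) = labs Fq (φ s) * labs Fq (φ q3) := by
        rw [hφ, polyToL_mul, labs_mul, ← hφ, hcross]
      have hspos : 0 < labs Fq (φ s) := lt_of_lt_of_le one_pos hsabs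
      have hsecond : labs Fq (φ (s * ((-1 : Polynomial Fq)^(k+1) * q1)))
          = labs Fq (φ s) * labs Fq (φ q1) := by
        rw [hφ, polyToL_mul, polyToL_mul, labs_mul, labs_mul, ← hφ, hφsign, hsignabs, one_mul]
      have hlt : labs Fq (φ (s * ((-1 : Polynomial Fq)^(k+1) * q1))) < labs Fq (φ (r * q2)) := by
        rw [hsecond, hfirst]
        exact mul_lt_mul_of_pos_left h13 hspos
      have hsum : labs Fq (φ (r * q2 + s * ((-1 : Polynomial Fq)^(k+1) * q1)))
          = labs Fq (φ (r * q2)) := by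
        rw [hφ, polyToL_add, ← hφ]
        exact labs_add_of_lt' hlt
      rw [hsum, hfirst] at hcol
      have : labs Fq (φ q3) ≤ labs Fq (φ s) * labs Fq (φ q3) := by
        nth_rewrite 1 [← one_mul (labs Fq (φ q3))]
        exact mul_le_mul_of_nonneg_right hsabs hq3pos.le
      linarith
    · have := labs_add_of_ne hAB
      rw [this]
      exact le_trans hBge (le_max_right _ _)
  -- column identities
  have hcol0 : γm 0 0 = E * q2 + F * ((-1 : Polynomial Fq)^(k+1) * q1) := by
    rw [← hDM, Matrix.mul_apply, Fin.sum_univ_two]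
    simp [hMdef, cfM]
    rfl
  have hcol1 : γm 1 0 = G * q2 + H * ((-1 : Polynomial Fq)^(k+1) * q1) := by
    rw [← hDM, Matrix.mul_apply, Fin.sum_univ_two]
    simp [hMdef, cfM]
    rfl
  have hvabs : vabs Fq (act Fq γ ![ξ, 1])
      = max (labs Fq (act Fq γ ![ξ, 1] 0)) (labs Fq (act Fq γ ![ξ, 1] 1)) := rfl
  by_cases hF : F = 0
  · have hH : H ≠ 0 := by
      intro h
      rw [hF, h] at hdetD
      simp at hdetD
    have hbound : labs Fq (φ (G * q2 + H * ((-1 : Polynomial Fq)^(k+1) * q1))) < labs Fq (φ q3) := by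
      rw [← hcol1]
      exact lt_of_le_of_lt (hent 1 0) hγ
    have := row G H hH hbound
    rw [hvabs, ← hcomp1] at *
    exact le_trans this (le_max_right _ _)
  · have hbound : labs Fq (φ (E * q2 + F * ((-1 : Polynomial Fq)^(k+1) * q1))) < labs Fq (φ q3) := by
      rw [← hcol0]
      exact lt_of_le_of_lt (hent 0 0) hγ
    have := row E F hF hbound
    rw [hvabs, ← hcomp0] at *
    exact le_trans this (le_max_left _ _)

end
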